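/- Let A, B be linearly independent vectors in ℝ², let a, b, c, d be integers with a·d − b·c ≠ 0, set C = a•A + b•B and D = c•A + d•B, and let K be the additive subgroup of ℝ² generated by {C, D}. Let m be the smallest positive integer such that m•A ∈ K and m•B ∈ K. Then m = |a·d − b·c| / gcd(a, b, c, d); in particular m divides |a·d − b·c|. -/

import Mathlib

lemma my_div_dvd_div {N x y : ℕ} (hx : x ∣ N) (hy : y ∣ N) (hN : N ≠ 0) :
    N / x ∣ N / y ↔ y ∣ x := by
  obtain ⟨x', hx'⟩ := hx
  obtain ⟨y', hy'⟩ := hy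
  subst hx'
  have hx0 : 0 < x := Nat.pos_of_ne_zero (by rintro rfl; simp_all)
  have hy0 : 0 < y := Nat.pos_of_ne_zero (by rintro rfl; simp_all)
  have hx'0 : 0 < x' := Nat.pos_of_ne_zero (by rintro rfl; simp_all)
  rw [Nat.mul_div_cancel_left _ hx0, hy', Nat.mul_div_cancel_left _ hy0]
  constructor
  · rintro ⟨s, hs⟩
    refine ⟨s, ?_⟩
    have h2 : x' * x = x' * (y * s) := by
      rw [Nat.mul_comm x' x, hy', hs]; ring
    exact Nat.eq_of_mul_eq_mul_left hx'0 h2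
  · rintro ⟨s, hs⟩
    refine ⟨s, ?_⟩
    have h2 : y * y' = y * (x' * s) := by rw [← hy', hs]; ring
    exact Nat.eq_of_mul_eq_mul_left hy0 h2

lemma my_lcm_div {N u v : ℕ} (hu : u ∣ N) (hv : v ∣ N) (hN : N ≠ 0) :
    Nat.lcm (N/u) (N/v) = N / Nat.gcd u v := by
  have hg : Nat.gcd u v ∣ N := (Nat.gcd_dvd_left u v).trans hu
  have hL1 : N/u ∣ N / Nat.gcd u v := (my_div_dvd_div hu hg hN).mpr (Nat.gcd_dvd_left u v)
  have hL2 : N/v ∣ N / Nat.gcd u v := (my_div_dvd_div hv hg hN).mpr (Nat.gcd_dvd_right u v)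
  set L := Nat.lcm (N/u) (N/v) with hLdef
  have hlcm_dvd : L ∣ N / Nat.gcd u v := Nat.lcm_dvd hL1 hL2
  have hw : L ∣ N := Nat.lcm_dvd (Nat.div_dvd_of_dvd hu) (Nat.div_dvd_of_dvd hv)
  have hLdiv : N / (N / L) = L := Nat.div_div_self hw hN
  have h1 : N / L ∣ u := (my_div_dvd_div hu (Nat.div_dvd_of_dvd hw) hN).mp
    (by rw [hLdiv]; exact Nat.dvd_lcm_left _ _)
  have h2 : N / L ∣ v := (my_div_dvd_div hv (Nat.div_dvd_of_dvd hw) hN).mp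
    (by rw [hLdiv]; exact Nat.dvd_lcm_right _ _)
  have h3 : N / Nat.gcd u v ∣ L := by
    rw [← hLdiv]
    exact (my_div_dvd_div hg (Nat.div_dvd_of_dvd hw) hN).mpr (Nat.dvd_gcd h1 h2)
  exact Nat.dvd_antisymm hlcm_dvd h3

/-- Explicit description of the integer `m` from Claims 1 and 3:
`m = |ad - bc| / gcd(a, b, c, d)`; in particular `m` divides `|ad - bc|`. -/
theorem stmt14 (A B : ℝ × ℝ) (hAB : LinearIndependent ℝ ![A, B])
    (a b c d : ℤ) (hdet : a * d - b * c ≠ 0)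
    (C D : ℝ × ℝ) (hC : C = a • A + b • B) (hD : D = c • A + d • B)
    (K : AddSubgroup (ℝ × ℝ)) (hK : K = AddSubgroup.closure ({C, D} : Set (ℝ × ℝ)))
    (m : ℕ) (hm : 0 < m) (hmA : m • A ∈ K) (hmB : m • B ∈ K)
    (hmin : ∀ k : ℕ, 0 < k → k • A ∈ K → k • B ∈ K → m ≤ k) :
    m = (a * d - b * c).natAbs / Int.gcd a (Int.gcd b (Int.gcd c d)) ∧
      m ∣ (a * d - b * c).natAbs := by
  have hli := LinearIndependent.pair_iff.mp hAB
  -- key: coefficient comparison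
  have key : ∀ (k l x y : ℤ), (x • C + y • D = k • A + l • B) ↔
      (x*a + y*c = k ∧ x*b + y*d = l) := by
    intro k l x y
    constructor
    · intro h
      rw [hC, hD] at h
      simp only [← Int.cast_smul_eq_zsmul ℝ] at h
      have h2 : ((x:ℝ)*a + y*c - k) • A + ((x:ℝ)*b + y*d - l) • B = 0 := by
        push_cast at h
        linear_combination (norm := module) h
      obtain ⟨e1, e2⟩ := hli _ _ h2
      constructor
      · have : ((x*a + y*c - k : ℤ) : ℝ) = 0 := by push_cast; linarith
        have := Int.cast_injective (α := ℝ) (by push_cast at this ⊢; linarith : ((x*a+y*c-k : ℤ):ℝ) = ((0:ℤ):ℝ))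
        omega
      · have := Int.cast_injective (α := ℝ) (by push_cast; linarith : ((x*b+y*d-l : ℤ):ℝ) = ((0:ℤ):ℝ))
        omega
    · rintro ⟨h1, h2⟩
      rw [hC, hD, ← h1, ← h2]
      module
  have memA : ∀ k : ℤ, k • A ∈ K ↔ ∃ x y : ℤ, x*a + y*c = k ∧ x*b + y*d = 0 := by
    intro k
    rw [hK, AddSubgroup.mem_closure_pair]
    constructor
    · rintro ⟨x, y, hxy⟩
      exact ⟨x, y, (key k 0 x y).mp (by rw [hxy]; simp)⟩
    · rintro ⟨x, y, h1, h2⟩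
      refine ⟨x, y, ?_⟩
      rw [(key k 0 x y).mpr ⟨h1, h2⟩]; simp
  have memB : ∀ k : ℤ, k • B ∈ K ↔ ∃ x y : ℤ, x*a + y*c = 0 ∧ x*b + y*d = k := by
    intro k
    rw [hK, AddSubgroup.mem_closure_pair]
    constructor
    · rintro ⟨x, y, hxy⟩
      exact ⟨x, y, (key 0 k x y).mp (by rw [hxy]; simp)⟩
    · rintro ⟨x, y, h1, h2⟩
      refine ⟨x, y, ?_⟩
      rw [(key 0 k x y).mpr ⟨h1, h2⟩]; simp
  set Δ : ℤ := a * d - b * c with hΔdef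
  -- gcds
  have hgbd0 : (Int.gcd b d : ℤ) ≠ 0 := by
    intro h
    have : b = 0 ∧ d = 0 := Int.gcd_eq_zero_iff.mp (by exact_mod_cast h)
    apply hdet; rw [hΔdef] at hdet ⊢; rw [this.1, this.2]; ring
  have hgac0 : (Int.gcd a c : ℤ) ≠ 0 := by
    intro h
    have : a = 0 ∧ c = 0 := Int.gcd_eq_zero_iff.mp (by exact_mod_cast h)
    apply hdet; rw [hΔdef] at hdet ⊢; rw [this.1, this.2]; ring
  have hgbdΔ : (Int.gcd b d : ℤ) ∣ Δ :=
    dvd_sub ((Int.gcd_dvd_right (a := b) (b := d)).mul_left a) ((Int.gcd_dvd_left (a := b) (b := d)).mul_right c)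
  have hgacΔ : (Int.gcd a c : ℤ) ∣ Δ :=
    dvd_sub ((Int.gcd_dvd_left (a := a) (b := c)).mul_right d) ((Int.gcd_dvd_right (a := a) (b := c)).mul_left b)
  obtain ⟨Δ1, hΔ1⟩ := hgbdΔ
  obtain ⟨Δ2, hΔ2⟩ := hgacΔ
  obtain ⟨b1, hb1⟩ := Int.gcd_dvd_left (a := b) (b := d)
  obtain ⟨d1, hd1⟩ := Int.gcd_dvd_right (a := b) (b := d)
  obtain ⟨a1, ha1⟩ := Int.gcd_dvd_left (a := a) (b := c)
  obtain ⟨c1, hc1⟩ := Int.gcd_dvd_right (a := a) (b := c)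
  have hrel1 : Δ1 = a * d1 - b1 * c := by
    have : (Int.gcd b d : ℤ) * Δ1 = (Int.gcd b d : ℤ) * (a * d1 - b1 * c) := by
      linear_combination -hΔ1 + a*hd1 - c*hb1 + hΔdef
    exact mul_left_cancel₀ hgbd0 this
  have hrel2 : Δ2 = a1 * d - c1 * b := by
    have : (Int.gcd a c : ℤ) * Δ2 = (Int.gcd a c : ℤ) * (a1 * d - c1 * b) := by
      linear_combination -hΔ2 + d*ha1 - b*hc1 + hΔdef
    exact mul_left_cancel₀ hgac0 this
  -- arithmetic characterizations
  have divA : ∀ k : ℤ, (∃ x y : ℤ, x*a + y*c = k ∧ x*b + y*d = 0) ↔ Δ1 ∣ k := by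
    intro k
    constructor
    · rintro ⟨x, y, h1, h2⟩
      have e1 : k * d = x * Δ := by rw [hΔdef]; linear_combination (-d)*h1 + c*h2
      have e2 : k * b = -(y * Δ) := by rw [hΔdef]; linear_combination (-b)*h1 + a*h2
      have hd1' : Δ ∣ k * b := ⟨-y, by linarith⟩
      have hd2' : Δ ∣ k * d := ⟨x, by linarith⟩
      have : Δ ∣ (Int.gcd (k*b) (k*d) : ℤ) := Int.dvd_coe_gcd hd1' hd2'
      rw [Int.gcd_mul_left] at this
      rw [Nat.cast_mul] at this
      rw [hΔ1] at this
      have : Δ1 ∣ (k.natAbs : ℤ) := by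
        have h' : (Int.gcd b d : ℤ) * Δ1 ∣ (Int.gcd b d : ℤ) * (k.natAbs : ℤ) := by
          rw [mul_comm ((Int.gcd b d : ℤ)) ((k.natAbs : ℤ))]; exact this
        exact (mul_dvd_mul_iff_left hgbd0).mp h'
      exact Int.dvd_natAbs.mp this
    · rintro ⟨t, rfl⟩
      refine ⟨t * d1, -(t * b1), ?_, ?_⟩
      · linear_combination (-t) * hrel1
      · linear_combination (t*d1) * hb1 - (t*b1) * hd1
  have divB : ∀ k : ℤ, (∃ x y : ℤ, x*a + y*c = 0 ∧ x*b + y*d = k) ↔ Δ2 ∣ k := by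
    intro k
    constructor
    · rintro ⟨x, y, h1, h2⟩
      have e1 : k * a = y * Δ := by rw [hΔdef]; linear_combination b*h1 - a*h2
      have e2 : k * c = -(x * Δ) := by rw [hΔdef]; linear_combination d*h1 - c*h2
      have hd1' : Δ ∣ k * a := ⟨y, by linarith⟩
      have hd2' : Δ ∣ k * c := ⟨-x, by linarith⟩
      have : Δ ∣ (Int.gcd (k*a) (k*c) : ℤ) := Int.dvd_coe_gcd hd1' hd2'
      rw [Int.gcd_mul_left] at this
      rw [Nat.cast_mul] at this
      rw [hΔ2] at this
      have : Δ2 ∣ (k.natAbs : ℤ) := by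
        have h' : (Int.gcd a c : ℤ) * Δ2 ∣ (Int.gcd a c : ℤ) * (k.natAbs : ℤ) := by
          rw [mul_comm ((Int.gcd a c : ℤ)) ((k.natAbs : ℤ))]; exact this
        exact (mul_dvd_mul_iff_left hgac0).mp h'
      exact Int.dvd_natAbs.mp this
    · rintro ⟨t, rfl⟩
      refine ⟨-(t * c1), t * a1, ?_, ?_⟩
      · linear_combination (t*a1) * hc1 - (t*c1) * ha1
      · linear_combination (-t) * hrel2
  -- nonzero
  have hΔ0 : Δ ≠ 0 := hdet
  have hΔ10 : Δ1 ≠ 0 := by rintro rfl; simp at hΔ1; exact hΔ0 hΔ1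
  have hΔ20 : Δ2 ≠ 0 := by rintro rfl; simp at hΔ2; exact hΔ0 hΔ2
  -- characterization over ℕ
  have charNat : ∀ k : ℕ, (k • A ∈ K ∧ k • B ∈ K) ↔ (Δ1.natAbs ∣ k ∧ Δ2.natAbs ∣ k) := by
    intro k
    rw [← natCast_zsmul A k, ← natCast_zsmul B k, memA, memB, divA, divB]
    constructor
    · rintro ⟨h1, h2⟩
      constructor
      · have := Int.natAbs_dvd_natAbs.mpr h1; simpa using this
      · have := Int.natAbs_dvd_natAbs.mpr h2; simpa using this
    · rintro ⟨h1, h2⟩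
      constructor
      · exact Int.natAbs_dvd.mp (by exact_mod_cast Int.natCast_dvd_natCast.mpr h1)
      · exact Int.natAbs_dvd.mp (by exact_mod_cast Int.natCast_dvd_natCast.mpr h2)
  set L := Nat.lcm Δ1.natAbs Δ2.natAbs with hLdef
  have hL0 : 0 < L := Nat.pos_of_ne_zero
    (Nat.lcm_ne_zero (by simpa using hΔ10) (by simpa using hΔ20))
  have hmL : m = L := by
    have hLmem := (charNat L).mpr ⟨Nat.dvd_lcm_left _ _, Nat.dvd_lcm_right _ _⟩
    have h1 : m ≤ L := hmin L hL0 hLmem.1 hLmem.2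
    have h2 : L ∣ m := Nat.lcm_dvd ((charNat m).mp ⟨hmA, hmB⟩).1 ((charNat m).mp ⟨hmA, hmB⟩).2
    exact Nat.le_antisymm h1 (Nat.le_of_dvd hm h2)
  -- now compute L
  set N := Δ.natAbs with hNdef
  have hN0 : N ≠ 0 := Int.natAbs_ne_zero.mpr hΔ0
  have hN1 : N = Int.gcd b d * Δ1.natAbs := by
    rw [hNdef, hΔ1, Int.natAbs_mul]; simp
  have hN2 : N = Int.gcd a c * Δ2.natAbs := by
    rw [hNdef, hΔ2, Int.natAbs_mul]; simp
  have hu : Int.gcd b d ∣ N := ⟨Δ1.natAbs, hN1⟩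
  have hv : Int.gcd a c ∣ N := ⟨Δ2.natAbs, hN2⟩
  have hgbd0' : Int.gcd b d ≠ 0 := by exact_mod_cast hgbd0
  have hgac0' : Int.gcd a c ≠ 0 := by exact_mod_cast hgac0
  have hn1 : Δ1.natAbs = N / Int.gcd b d := by
    rw [hN1, Nat.mul_div_cancel_left _ (Nat.pos_of_ne_zero hgbd0')]
  have hn2 : Δ2.natAbs = N / Int.gcd a c := by
    rw [hN2, Nat.mul_div_cancel_left _ (Nat.pos_of_ne_zero hgac0')]
  have hgeq : Nat.gcd (Int.gcd a c) (Int.gcd b d) = Int.gcd a (Int.gcd b (Int.gcd c d)) := by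
    simp only [Int.gcd, Int.natAbs_natCast]
    rw [Nat.gcd_assoc, Nat.gcd_comm c.natAbs, Nat.gcd_assoc, Nat.gcd_comm d.natAbs c.natAbs]
  have hLcomp : L = N / Int.gcd a (Int.gcd b (Int.gcd c d)) := by
    rw [hLdef, hn1, hn2, Nat.lcm_comm, my_lcm_div hv hu hN0, hgeq]
  refine ⟨by rw [hmL, hLcomp], ?_⟩
  rw [hmL, hLcomp]
  have hgdvd : Int.gcd a (Int.gcd b (Int.gcd c d)) ∣ N := by
    rw [← hgeq]; exact (Nat.gcd_dvd_left _ _).trans hv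
  exact Nat.div_dvd_of_dvd hgdvd
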